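/- Let u_n be the normalized Maclaurin coefficients of e^{pz}·J_ν(z), i.e. u_n = Γ(ν+1) times the n-th Maclaurin coefficient of z ↦ e^{pz}·g_ν(z). Then u_0 = 1, u_1 = p, and for every natural number n ≥ 1, u_{n+1} = (p(2ν+2n+1)/((n+1)(2ν+n+1)))·u_n − ((p²+1)/((n+1)(2ν+n+1)))·u_{n−1}. -/

import Mathlib

open Complex

/-- The entire part of the Bessel function of the first kind:
`J_ν(z) = (z/2)^ν * besselSeries ν z`. -/
noncomputable def besselSeries (ν : ℂ) (z : ℂ) : ℂ :=
  ∑' k : ℕ, (-1) ^ k * z ^ (2 * k) / (4 ^ k * (Nat.factorial k : ℂ) * Complex.Gamma (ν + (k : ℂ) + 1))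

/-- The normalized `n`-th Maclaurin coefficient of `h(z) * J_ν(z)`:
`Γ(ν+1)` times the `n`-th Maclaurin coefficient of `z ↦ h z * besselSeries ν z`. -/
noncomputable def normCoeff (ν : ℂ) (h : ℂ → ℂ) (n : ℕ) : ℂ :=
  Complex.Gamma (ν + 1) *
    (iteratedDeriv n (fun z => h z * besselSeries ν z) 0 / (Nat.factorial n : ℂ))

namespace ExpBessel

open Finset
open scoped ENNReal NNReal

noncomputable def aCo (ν : ℂ) (k : ℕ) : ℂ :=
  (-1) ^ k / (4 ^ k * (Nat.factorial k : ℂ) * Complex.Gamma (ν + (k : ℂ) + 1))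

noncomputable def eCo (p : ℂ) (n : ℕ) : ℂ := p ^ n / (Nat.factorial n : ℂ)

noncomputable def bCo (ν : ℂ) (n : ℕ) : ℂ := if 2 ∣ n then aCo ν (n / 2) else 0

noncomputable def cCo (ν p : ℂ) (n : ℕ) : ℂ :=
  ∑ k ∈ Finset.range (n + 1), if 2 * k ≤ n then aCo ν k * eCo p (n - 2 * k) else 0

variable {ν p : ℂ} (hν : ∀ n : ℕ, 2 * ν + (n : ℂ) + 1 ≠ 0)

include hν

lemma nu_add_ne (k : ℕ) : ν + (k : ℂ) + 1 ≠ 0 := fun h =>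
  hν (2 * k + 1) (by push_cast; linear_combination 2 * h)

lemma gamma_ne (k : ℕ) : Complex.Gamma (ν + (k : ℂ) + 1) ≠ 0 := by
  apply Complex.Gamma_ne_zero
  intro m h
  exact hν (2 * (k + m) + 1) (by push_cast; linear_combination 2 * h)

lemma aCo_ne (k : ℕ) : aCo ν k ≠ 0 := by
  apply div_ne_zero
  · exact pow_ne_zero _ (by norm_num)
  · exact mul_ne_zero (mul_ne_zero (pow_ne_zero _ (by norm_num))
      (Nat.cast_ne_zero.2 (Nat.factorial_ne_zero k))) (gamma_ne hν k)

lemma aCo_succ (k : ℕ) :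
    aCo ν (k + 1) = -aCo ν k / (4 * ((k : ℂ) + 1) * (ν + (k : ℂ) + 1)) := by
  have h1 := gamma_ne hν k
  have h2 := nu_add_ne hν k
  have h3 : (Nat.factorial k : ℂ) ≠ 0 := Nat.cast_ne_zero.2 (Nat.factorial_ne_zero k)
  have h4 : (4 : ℂ) ^ k ≠ 0 := pow_ne_zero _ (by norm_num)
  have h5 : ((k : ℂ) + 1) ≠ 0 := Nat.cast_add_one_ne_zero k
  unfold aCo
  rw [show (ν + ((k : ℕ) + 1 : ℕ) + 1 : ℂ) = (ν + k + 1) + 1 by push_cast; ring,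
    Complex.Gamma_add_one _ h2, Nat.factorial_succ]
  push_cast
  field_simp
  ring

lemma aCo_prev (j : ℕ) :
    aCo ν j = -(4 * ((j : ℂ) + 1) * (ν + (j : ℂ) + 1)) * aCo ν (j + 1) := by
  rw [aCo_succ hν j]
  have h2 := nu_add_ne hν j
  have h5 : ((j : ℂ) + 1) ≠ 0 := Nat.cast_add_one_ne_zero j
  field_simp

omit hν in
lemma eCo_succ (m : ℕ) : p * eCo p m = ((m : ℂ) + 1) * eCo p (m + 1) := by
  have h3 : (Nat.factorial m : ℂ) ≠ 0 := Nat.cast_ne_zero.2 (Nat.factorial_ne_zero m)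
  have h5 : ((m : ℂ) + 1) ≠ 0 := Nat.cast_add_one_ne_zero m
  unfold eCo
  rw [Nat.factorial_succ]
  push_cast
  field_simp
  ring


include hν in
lemma summable_a (z : ℂ) : Summable (fun k => aCo ν k * z ^ (2 * k)) := by
  apply summable_of_ratio_norm_eventually_le (r := 1/2) (by norm_num)
  rw [Filter.eventually_atTop]
  refine ⟨⌈‖ν‖ + ‖z‖ ^ 2⌉₊, fun k hk => ?_⟩
  have hkk : ‖ν‖ + ‖z‖ ^ 2 ≤ (k : ℝ) := (Nat.ceil_le.1 hk)
  have hlow : (k : ℝ) + 1 - ‖ν‖ ≤ ‖ν + (k : ℂ) + 1‖ := by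
    have h1 : ‖((k : ℂ) + 1)‖ ≤ ‖ν + (k : ℂ) + 1‖ + ‖ν‖ := by
      calc ‖((k : ℂ) + 1)‖ = ‖(ν + (k : ℂ) + 1) + -ν‖ := by ring_nf
        _ ≤ ‖ν + (k : ℂ) + 1‖ + ‖-ν‖ := norm_add_le _ _
        _ = ‖ν + (k : ℂ) + 1‖ + ‖ν‖ := by rw [norm_neg]
    have h2 : ‖((k : ℂ) + 1)‖ = (k : ℝ) + 1 := by
      rw [show ((k : ℂ) + 1) = ((k + 1 : ℕ) : ℂ) by push_cast; ring, Complex.norm_natCast]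
      push_cast; ring
    linarith
  have hb : ‖z‖ ^ 2 ≤ 2 * ((k : ℝ) + 1) * ‖ν + (k : ℂ) + 1‖ := by
    nlinarith [norm_nonneg ν, norm_nonneg z, sq_nonneg ‖z‖, Nat.cast_nonneg (α := ℝ) k]
  have hD : ‖(4 * ((k : ℂ) + 1) * (ν + (k : ℂ) + 1))‖ = 4 * ((k : ℝ) + 1) * ‖ν + (k : ℂ) + 1‖ := by
    rw [norm_mul, norm_mul]
    have h2 : ‖((k : ℂ) + 1)‖ = (k : ℝ) + 1 := by
      rw [show ((k : ℂ) + 1) = ((k + 1 : ℕ) : ℂ) by push_cast; ring, Complex.norm_natCast]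
      push_cast; ring
    simp [h2]
  have hDpos : (0 : ℝ) < 4 * ((k : ℝ) + 1) * ‖ν + (k : ℂ) + 1‖ := by
    have := norm_pos_iff.2 (nu_add_ne hν k)
    positivity
  have key : aCo ν (k + 1) * z ^ (2 * (k + 1))
      = (aCo ν k * z ^ (2 * k)) * (-z ^ 2 / (4 * ((k : ℂ) + 1) * (ν + (k : ℂ) + 1))) := by
    simp only [aCo_succ hν k]
    rw [show 2 * (k + 1) = 2 * k + 2 by ring, pow_add]
    ring
  rw [key, norm_mul]
  have hfrac : ‖(-z ^ 2 / (4 * ((k : ℂ) + 1) * (ν + (k : ℂ) + 1)))‖ ≤ 1/2 := by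
    rw [norm_div, norm_neg, norm_pow, hD, div_le_iff₀ hDpos]
    nlinarith [norm_nonneg (ν + (k : ℂ) + 1)]
  calc ‖aCo ν k * z ^ (2 * k)‖ * ‖(-z ^ 2 / (4 * ((k : ℂ) + 1) * (ν + (k : ℂ) + 1)))‖
      ≤ ‖aCo ν k * z ^ (2 * k)‖ * (1/2) := by
        exact mul_le_mul_of_nonneg_left hfrac (norm_nonneg _)
    _ = 1/2 * ‖aCo ν k * z ^ (2 * k)‖ := by ring

omit hν in
lemma bessel_eq (z : ℂ) : besselSeries ν z = ∑' k, aCo ν k * z ^ (2 * k) :=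
  tsum_congr fun k => by rw [aCo]; ring


omit hν in
lemma two_mul_inj : Function.Injective (fun k : ℕ => 2 * k) := fun a b h => by
  simpa using h

omit hν in
lemma bCo_two_mul (k : ℕ) : bCo ν (2 * k) = aCo ν k := by
  simp [bCo, Nat.mul_div_cancel_left _ (by norm_num : 0 < 2)]

omit hν in
lemma bCo_support (z : ℂ) : ∀ n ∉ Set.range (fun k : ℕ => 2 * k), bCo ν n * z ^ n = 0 := by
  intro n hn
  have : ¬ (2 ∣ n) := by
    intro ⟨c, hc⟩; exact hn ⟨c, hc.symm⟩
  simp [bCo, this]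

include hν in
lemma summable_b (z : ℂ) : Summable (fun n => bCo ν n * z ^ n) := by
  rw [← Function.Injective.summable_iff two_mul_inj (bCo_support z)]
  have : ((fun n => bCo ν n * z ^ n) ∘ fun k : ℕ => 2 * k) = fun k => aCo ν k * z ^ (2 * k) := by
    funext k; simp [Function.comp, bCo_two_mul]
  rw [this]
  exact summable_a hν z

include hν in
lemma hasSum_b (z : ℂ) : HasSum (fun n => bCo ν n * z ^ n) (besselSeries ν z) := by
  have h2 : ∑' n, bCo ν n * z ^ n = besselSeries ν z := by
    rw [← Function.Injective.tsum_eq two_mul_inj (f := fun n => bCo ν n * z ^ n)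
      (by intro x hx; by_contra hc; exact hx (bCo_support z x hc)), bessel_eq]
    exact tsum_congr fun k => by simp [bCo_two_mul]
  exact h2 ▸ (summable_b hν z).hasSum

omit hν in
lemma eCo_mul_pow (z : ℂ) (n : ℕ) : eCo p n * z ^ n = (p * z) ^ n / (Nat.factorial n : ℂ) := by
  rw [eCo, mul_pow]; ring

omit hν in
lemma hasSum_e (z : ℂ) : HasSum (fun n => eCo p n * z ^ n) (Complex.exp (p * z)) := by
  have h1 : Summable fun n => (p * z) ^ n / (Nat.factorial n : ℂ) :=
    NormedSpace.expSeries_div_summable (p * z)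
  have h2 : Complex.exp (p * z) = ∑' n, (p * z) ^ n / (Nat.factorial n : ℂ) := by
    rw [Complex.exp_eq_exp_ℂ, NormedSpace.exp_eq_tsum_div]
  simp only [eCo_mul_pow]
  exact h2 ▸ h1.hasSum

omit hν in
lemma summable_norm_e (z : ℂ) : Summable (fun n => ‖eCo p n * z ^ n‖) := by
  simp only [eCo_mul_pow]
  exact NormedSpace.norm_expSeries_div_summable (p * z)

include hν in
lemma summable_norm_b (z : ℂ) : Summable (fun n => ‖bCo ν n * z ^ n‖) :=
  (summable_norm_iff).2 (summable_b hν z)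

omit hν in
lemma sum_eb (n : ℕ) (z : ℂ) :
    ∑ m ∈ Finset.range (n + 1), (eCo p m * z ^ m) * (bCo ν (n - m) * z ^ (n - m))
      = cCo ν p n * z ^ n := by
  rw [cCo, Finset.sum_mul]
  have hL : ∀ m ∈ Finset.range (n + 1), (eCo p m * z ^ m) * (bCo ν (n - m) * z ^ (n - m))
      = if 2 ∣ (n - m) then aCo ν ((n - m) / 2) * eCo p m * z ^ n else 0 := by
    intro m hm
    rw [Finset.mem_range] at hm
    rw [bCo]
    split_ifs with h
    · have hz : z ^ m * z ^ (n - m) = z ^ n := by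
        rw [← pow_add]; congr 1; omega
      rw [← hz]; ring
    · ring
  have hR : ∀ k ∈ Finset.range (n + 1),
      (if 2 * k ≤ n then aCo ν k * eCo p (n - 2 * k) else 0) * z ^ n
      = if 2 * k ≤ n then aCo ν k * eCo p (n - 2 * k) * z ^ n else 0 := by
    intro k _
    split_ifs <;> ring
  rw [Finset.sum_congr rfl hL, Finset.sum_congr rfl hR, ← Finset.sum_filter, ← Finset.sum_filter]
  apply Finset.sum_nbij' (i := fun m => (n - m) / 2) (j := fun k => n - 2 * k)
  · intro m hm
    simp only [Finset.mem_filter, Finset.mem_range] at hm ⊢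
    omega
  · intro k hk
    simp only [Finset.mem_filter, Finset.mem_range] at hk ⊢
    omega
  · intro m hm
    simp only [Finset.mem_filter, Finset.mem_range] at hm
    omega
  · intro k hk
    simp only [Finset.mem_filter, Finset.mem_range] at hk
    omega
  · intro m hm
    simp only [Finset.mem_filter, Finset.mem_range] at hm
    rw [show n - 2 * ((n - m) / 2) = m by omega]

include hν in
lemma hasSum_c (z : ℂ) :
    HasSum (fun n => cCo ν p n * z ^ n) (Complex.exp (p * z) * besselSeries ν z) := by
  have h := hasSum_sum_range_mul_of_summable_norm
    (f := fun n => eCo p n * z ^ n) (g := fun n => bCo ν n * z ^ n)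
    (summable_norm_e z) (summable_norm_b hν z)
  rw [(hasSum_e z).tsum_eq, (hasSum_b hν z).tsum_eq] at h
  have : (fun n => ∑ k ∈ Finset.range (n + 1),
      (eCo p k * z ^ k) * (bCo ν (n - k) * z ^ (n - k))) = fun n => cCo ν p n * z ^ n :=
    funext fun n => sum_eb n z
  rwa [this] at h

omit hν in
lemma ofScalars_coeff (c : ℕ → ℂ) (n : ℕ) :
    (FormalMultilinearSeries.ofScalars ℂ c).coeff n = c n := by
  have := FormalMultilinearSeries.ofScalars_apply_eq (c := c) (1 : ℂ) n
  simp only [smul_eq_mul, one_pow, mul_one] at this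
  rw [FormalMultilinearSeries.coeff, ← this]
  rfl

include hν in
lemma hasFPS : HasFPowerSeriesOnBall (fun z => Complex.exp (p * z) * besselSeries ν z)
    (FormalMultilinearSeries.ofScalars ℂ (cCo ν p)) 0 1 := by
  constructor
  · have hs : Summable fun n => ‖cCo ν p n‖ := by
      apply (summable_norm_iff).2
      apply ((hasSum_c (p := p) hν 1).summable.congr (fun n => by simp))
    rw [← ENNReal.coe_one]
    apply FormalMultilinearSeries.le_radius_of_summable_norm
    apply hs.congr
    intro n
    simp [FormalMultilinearSeries.ofScalars_norm, ofScalars_coeff]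
  · exact zero_lt_one
  · intro y _
    rw [zero_add]
    have h := hasSum_c (p := p) hν y
    apply h.congr fun n => ?_
    simp [FormalMultilinearSeries.ofScalars_apply_eq, smul_eq_mul, ofScalars_coeff, mul_comm]


include hν in
lemma iteratedDeriv_eq (n : ℕ) :
    iteratedDeriv n (fun z => Complex.exp (p * z) * besselSeries ν z) 0
      = (Nat.factorial n : ℂ) * cCo ν p n := by
  have h := (hasFPS (p := p) hν).factorial_smul (1 : ℂ) n
  rw [iteratedDeriv_eq_iteratedFDeriv]
  rw [← h]
  have h2 := FormalMultilinearSeries.ofScalars_apply_eq (c := cCo ν p) (1 : ℂ) n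
  rw [h2]
  simp

include hν in
lemma normCoeff_eq (n : ℕ) :
    normCoeff ν (fun z => Complex.exp (p * z)) n = Complex.Gamma (ν + 1) * cCo ν p n := by
  rw [normCoeff]
  rw [show (fun z => (fun z => Complex.exp (p * z)) z * besselSeries ν z)
      = fun z => Complex.exp (p * z) * besselSeries ν z from rfl]
  rw [iteratedDeriv_eq hν n]
  have h3 : (Nat.factorial n : ℂ) ≠ 0 := Nat.cast_ne_zero.2 (Nat.factorial_ne_zero n)
  field_simp


omit hν in
lemma cCo_ext (n N : ℕ) (h : n + 1 ≤ N) :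
    cCo ν p n = ∑ k ∈ Finset.range N,
      (if 2 * k ≤ n then aCo ν k * eCo p (n - 2 * k) else 0) := by
  rw [cCo]
  apply Finset.sum_subset (Finset.range_subset_range.2 h)
  intro x hx hx'
  rw [Finset.mem_range] at hx
  rw [Finset.mem_range, not_lt] at hx'
  rw [if_neg (by omega)]

include hν

lemma key (m : ℕ) :
    ((m : ℂ) + 2) * (2 * ν + (m : ℂ) + 2) * cCo ν p (m + 2) + (p ^ 2 + 1) * cCo ν p m
      = p * (2 * ν + 2 * (m : ℂ) + 3) * cCo ν p (m + 1) := by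
  have hshift : ∑ k ∈ Finset.range (m + 3), (if 2 * k ≤ m then aCo ν k * eCo p (m - 2 * k) else 0)
      = ∑ k ∈ Finset.range (m + 3),
        (if 1 ≤ k ∧ 2 * k ≤ m + 2 then aCo ν (k - 1) * eCo p (m + 2 - 2 * k) else 0) := by
    rw [Finset.sum_range_succ' (f := fun k =>
        if 1 ≤ k ∧ 2 * k ≤ m + 2 then aCo ν (k - 1) * eCo p (m + 2 - 2 * k) else 0) (m + 2)]
    rw [if_neg (by omega)]
    rw [Finset.sum_range_succ (f := fun k => if 2 * k ≤ m then aCo ν k * eCo p (m - 2 * k) else 0)]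
    rw [if_neg (by omega)]
    rw [add_zero, add_zero]
    apply Finset.sum_congr rfl
    intro k _
    have hiff : (1 ≤ k + 1 ∧ 2 * (k + 1) ≤ m + 2) ↔ 2 * k ≤ m := by omega
    rw [if_congr hiff rfl rfl, show k + 1 - 1 = k from rfl,
      show m + 2 - 2 * (k + 1) = m - 2 * k by omega]
  rw [cCo_ext (n := m + 2) (N := m + 3) (by omega), cCo_ext (n := m + 1) (N := m + 3) (by omega),
    cCo_ext (n := m) (N := m + 3) (by omega)]
  rw [show (p ^ 2 + 1) * (∑ k ∈ Finset.range (m + 3),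
      (if 2 * k ≤ m then aCo ν k * eCo p (m - 2 * k) else 0))
    = p ^ 2 * (∑ k ∈ Finset.range (m + 3),
      (if 2 * k ≤ m then aCo ν k * eCo p (m - 2 * k) else 0))
    + ∑ k ∈ Finset.range (m + 3),
      (if 1 ≤ k ∧ 2 * k ≤ m + 2 then aCo ν (k - 1) * eCo p (m + 2 - 2 * k) else 0) by
      rw [← hshift]; ring]
  rw [Finset.mul_sum, Finset.mul_sum, Finset.mul_sum, ← Finset.sum_add_distrib,
    ← Finset.sum_add_distrib]
  apply Finset.sum_congr rfl
  intro k hk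
  rw [Finset.mem_range] at hk
  by_cases h1 : 2 * k ≤ m
  · -- generic case
    rw [if_pos (by omega : 2 * k ≤ m + 2), if_pos h1, if_pos (by omega : 2 * k ≤ m + 1)]
    have hshiftterm : (if 1 ≤ k ∧ 2 * k ≤ m + 2 then aCo ν (k - 1) * eCo p (m + 2 - 2 * k) else 0)
        = -(4 * (k : ℂ) * (ν + (k : ℂ))) * (aCo ν k * eCo p (m + 2 - 2 * k)) := by
      rcases Nat.eq_zero_or_pos k with hk0 | hk1
      · subst hk0; simp
      · obtain ⟨j, rfl⟩ : ∃ j, k = j + 1 := ⟨k - 1, by omega⟩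
        rw [if_pos ⟨by omega, by omega⟩, show j + 1 - 1 = j from rfl, aCo_prev hν j]
        push_cast
        ring
    rw [hshiftterm]
    have e1 : p * eCo p (m + 1 - 2 * k) = ((m : ℂ) + 2 - 2 * k) * eCo p (m + 2 - 2 * k) := by
      have := eCo_succ (p := p) (m + 1 - 2 * k)
      rw [show m + 1 - 2 * k + 1 = m + 2 - 2 * k by omega] at this
      rw [this, Nat.cast_sub (by omega : 2 * k ≤ m + 1)]
      push_cast
      ring
    have e0 : p * eCo p (m - 2 * k) = ((m : ℂ) + 1 - 2 * k) * eCo p (m + 1 - 2 * k) := by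
      have := eCo_succ (p := p) (m - 2 * k)
      rw [show m - 2 * k + 1 = m + 1 - 2 * k by omega] at this
      rw [this, Nat.cast_sub (by omega : 2 * k ≤ m)]
      push_cast
      ring
    linear_combination (p * aCo ν k) * e0
      + (-(2 * ν + (m : ℂ) + 2 + 2 * (k : ℂ)) * aCo ν k) * e1
  · by_cases h2 : 2 * k ≤ m + 1
    · -- 2k = m+1
      have hk1 : 1 ≤ k := by omega
      rw [if_pos (by omega : 2 * k ≤ m + 2), if_neg h1, if_pos h2, if_pos ⟨hk1, by omega⟩]
      obtain ⟨j, rfl⟩ : ∃ j, k = j + 1 := ⟨k - 1, by omega⟩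
      rw [show (j : ℕ) + 1 - 1 = j from rfl, aCo_prev hν j]
      have e1 : p * eCo p (m + 1 - 2 * (j + 1)) = ((m : ℂ) + 2 - 2 * ((j : ℂ) + 1)) * eCo p (m + 2 - 2 * (j + 1)) := by
        have := eCo_succ (p := p) (m + 1 - 2 * (j + 1))
        rw [show m + 1 - 2 * (j + 1) + 1 = m + 2 - 2 * (j + 1) by omega] at this
        rw [this, Nat.cast_sub (by omega : 2 * (j + 1) ≤ m + 1)]
        push_cast
        ring
      have hm : (m : ℂ) + 1 = 2 * ((j : ℂ) + 1) := by
        have : m + 1 = 2 * (j + 1) := by omega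
        exact_mod_cast congrArg (Nat.cast : ℕ → ℂ) this
      linear_combination (-(2 * ν + 2 * (m : ℂ) + 3) * aCo ν (j + 1)) * e1
        + ((2 * (j : ℂ) - (m : ℂ)) * aCo ν (j + 1) * eCo p (m + 2 - 2 * (j + 1))) * hm
    · by_cases h3 : 2 * k ≤ m + 2
      · -- 2k = m+2
        have hk1 : 1 ≤ k := by omega
        rw [if_pos h3, if_neg h1, if_neg h2, if_pos ⟨hk1, h3⟩]
        obtain ⟨j, rfl⟩ : ∃ j, k = j + 1 := ⟨k - 1, by omega⟩
        rw [show (j : ℕ) + 1 - 1 = j from rfl, aCo_prev hν j]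
        have hm : (m : ℂ) + 2 = 2 * ((j : ℂ) + 1) := by
          have : m + 2 = 2 * (j + 1) := by omega
          exact_mod_cast congrArg (Nat.cast : ℕ → ℂ) this
        linear_combination (((m : ℂ) + 2 * (j : ℂ) + 2 * ν + 4) * aCo ν (j + 1)
          * eCo p (m + 2 - 2 * (j + 1))) * hm
      · rw [if_neg h3, if_neg h1, if_neg h2, if_neg (by omega)]
        ring


include hν

end ExpBessel

theorem exp_besselJ_coeff_recurrence (ν p : ℂ) (hν : ∀ n : ℕ, 2 * ν + (n : ℂ) + 1 ≠ 0)
    (u : ℕ → ℂ) (hu : ∀ n, u n = normCoeff ν (fun z => Complex.exp (p * z)) n) :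
    u 0 = 1 ∧ u 1 = p ∧ (∀ n : ℕ, 1 ≤ n →
      u (n + 1) = (p * (2 * ν + 2 * ((n : ℂ)) + 1) / ((((n : ℂ)) + 1) * (2 * ν + ((n : ℂ)) + 1))) * u n + (-((p ^ 2 + 1) / ((((n : ℂ)) + 1) * (2 * ν + ((n : ℂ)) + 1)))) * u (n - 1)) := by
  have hu' : ∀ n, u n = Complex.Gamma (ν + 1) * ExpBessel.cCo ν p n := fun n => by
    rw [hu n, ExpBessel.normCoeff_eq hν n]
  have hg : Complex.Gamma (ν + 1) ≠ 0 := by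
    have := ExpBessel.gamma_ne hν 0
    simpa using this
  refine ⟨?_, ?_, ?_⟩
  · rw [hu' 0]
    simp [ExpBessel.cCo, ExpBessel.aCo, ExpBessel.eCo]
    field_simp
  · rw [hu' 1]
    rw [show ExpBessel.cCo ν p 1 = ExpBessel.aCo ν 0 * ExpBessel.eCo p 1 by
      simp [ExpBessel.cCo, Finset.sum_range_succ]]
    simp [ExpBessel.aCo, ExpBessel.eCo]
    field_simp
  · intro n hn
    obtain ⟨m, rfl⟩ : ∃ m, n = m + 1 := ⟨n - 1, by omega⟩
    have hkey := ExpBessel.key (p := p) hν m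
    rw [hu', hu', hu', show m + 1 + 1 = m + 2 from rfl, show m + 1 - 1 = m from rfl]
    have hD1 : ((m : ℂ) + 1 + 1) ≠ 0 := by
      have := Nat.cast_add_one_ne_zero (R := ℂ) (m + 1)
      push_cast at this ⊢
      convert this using 2
    have hD2 : (2 * ν + ((m : ℂ) + 1) + 1) ≠ 0 := by
      have := hν (m + 1)
      push_cast at this ⊢
      convert this using 2
    push_cast
    field_simp
    rw [eq_div_iff (by convert hD2 using 1; ring)]
    linear_combination hkey
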